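/- arXiv:2501.08905 — 4 statements merged into one kernel-verified Lean document; each statement's English description precedes it below -/
import Mathlib

section
/- Let Z = {z_1, ..., z_k} be an inclusion-wise minimal generating set of a group G. Then the map from subsets S ⊆ {1,...,k} to G sending S to the product ∏_{i∈S} z_i (in increasing index order) is injective. -/
open scoped List in
open Finset in
lemma sort_append_max {α : Type*} [LinearOrder α] [DecidableEq α] {a : α} {s : Finset α}
    (h₁ : ∀ b ∈ s, b ≤ a) (h₂ : a ∉ s) :
    sort (insert a s) (· ≤ ·) = sort s (· ≤ ·) ++ [a] := by
  apply List.Perm.eq_of_pairwise' (r := (· ≤ ·)) (pairwise_sort _ _) ?_ ((sort_perm_toList _ _).trans ?_)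
  · rw [List.pairwise_append]
    refine ⟨pairwise_sort _ _, List.pairwise_singleton _ a, ?_⟩
    intro b hb c hc
    rw [List.mem_singleton] at hc
    subst hc
    exact h₁ b ((mem_sort _).mp hb)
  · calc (insert a s).toList ~ a :: s.toList := toList_insert h₂
      _ ~ a :: sort s (· ≤ ·) := (sort_perm_toList _ _).symm.cons a
      _ ~ sort s (· ≤ ·) ++ [a] := (List.perm_append_singleton a _).symm

/-- If some generator lies in the closure of the others, that closure is everything. -/
lemma closure_diff_eq_top {G : Type*} [Group G] {k : ℕ} (z : Fin k → G)
    (hgen : Subgroup.closure (Set.range z) = ⊤) (i : Fin k)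
    (hi : z i ∈ Subgroup.closure (Set.range z \ {z i})) :
    Subgroup.closure (Set.range z \ {z i}) = ⊤ := by
  rw [eq_top_iff, ← hgen, Subgroup.closure_le]
  intro x hx
  by_cases hxi : x = z i
  · subst hxi; exact hi
  · exact Subgroup.subset_closure ⟨hx, hxi⟩

/-- Splitting off the maximal element of the sorted product. -/
lemma prod_erase_max {G : Type*} [Group G] {k : ℕ} (z : Fin k → G)
    (S : Finset (Fin k)) (hS : S.Nonempty) :
    ((S.sort (· ≤ ·)).map z).prod
      = (((S.erase (S.max' hS)).sort (· ≤ ·)).map z).prod * z (S.max' hS) := by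
  set m := S.max' hS with hm
  have h1 : ∀ b ∈ S.erase m, b ≤ m := fun b hb => S.le_max' b (Finset.mem_of_mem_erase hb)
  have h2 : m ∉ S.erase m := Finset.notMem_erase _ _
  have h3 : S.sort (· ≤ ·) = (S.erase m).sort (· ≤ ·) ++ [m] := by
    have h4 : S = insert m (S.erase m) := (Finset.insert_erase (hm ▸ S.max'_mem hS)).symm
    rw [h4, Finset.erase_insert h2, sort_append_max h1 h2]
  rw [h3, List.map_append, List.prod_append, List.map_singleton, List.prod_singleton]

/-- The asymmetric case: `m` is in `S` but not `T`, dominates both, equal products: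
contradiction with minimality. -/
lemma asym_case {G : Type*} [Group G] {k : ℕ} (z : Fin k → G)
    (hinj : Function.Injective z)
    (hgen : Subgroup.closure (Set.range z) = ⊤)
    (hmin : ∀ i : Fin k, Subgroup.closure (Set.range z \ {z i}) ≠ ⊤)
    (S T : Finset (Fin k)) (m : Fin k) (hmS : m ∈ S) (hmT : m ∉ T)
    (hSle : ∀ j ∈ S, j ≤ m) (hTle : ∀ j ∈ T, j ≤ m)
    (heq : ((S.sort (· ≤ ·)).map z).prod = ((T.sort (· ≤ ·)).map z).prod) : False := by
  have hSne : S.Nonempty := ⟨m, hmS⟩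
  have hmax : S.max' hSne = m := le_antisymm (Finset.max'_le _ _ _ hSle) (Finset.le_max' _ _ hmS)
  rw [prod_erase_max z S hSne, hmax] at heq
  set H := Subgroup.closure (Set.range z \ {z m}) with hH
  have hmem : ∀ (U : Finset (Fin k)), m ∉ U → ((U.sort (· ≤ ·)).map z).prod ∈ H := by
    intro U hmU
    apply list_prod_mem
    intro x hx
    rw [List.mem_map] at hx
    obtain ⟨j, hj, rfl⟩ := hx
    rw [Finset.mem_sort] at hj
    refine Subgroup.subset_closure ⟨Set.mem_range_self j, ?_⟩
    simp only [Set.mem_singleton_iff]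
    intro hzj
    exact hmU (hinj hzj ▸ hj)
  have hzm : z m ∈ H := by
    have h1 : ((((S.erase m).sort (· ≤ ·)).map z).prod) ∈ H :=
      hmem _ (Finset.notMem_erase _ _)
    have h2 : ((T.sort (· ≤ ·)).map z).prod ∈ H := hmem _ hmT
    have : z m = (((S.erase m).sort (· ≤ ·)).map z).prod⁻¹ * ((T.sort (· ≤ ·)).map z).prod := by
      rw [← heq]; group
    rw [this]
    exact mul_mem (inv_mem h1) h2
  exact hmin m (closure_diff_eq_top z hgen m hzm)

/-- Let `Z = {z 1, ..., z k}` be an inclusion-wise minimal generating set of a group `G`. Then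
the map sending a subset `S ⊆ {1,...,k}` to the product `∏_{i ∈ S} z i` (taken in increasing
index order) is injective. -/
theorem stmt_1 {G : Type*} [Group G] {k : ℕ} (z : Fin k → G)
    (hinj : Function.Injective z)
    (hgen : Subgroup.closure (Set.range z) = ⊤)
    (hmin : ∀ i : Fin k, Subgroup.closure (Set.range z \ {z i}) ≠ ⊤) :
    Function.Injective (fun S : Finset (Fin k) => ((S.sort (· ≤ ·)).map z).prod) := by
  have key : ∀ n (S T : Finset (Fin k)), S.card + T.card ≤ n →
      ((S.sort (· ≤ ·)).map z).prod = ((T.sort (· ≤ ·)).map z).prod → S = T := by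
    intro n
    induction n with
    | zero =>
      intro S T hcard _
      have hS : S = ∅ := Finset.card_eq_zero.mp (by omega)
      have hT : T = ∅ := Finset.card_eq_zero.mp (by omega)
      rw [hS, hT]
    | succ n ih =>
      intro S T hcard heq
      rcases S.eq_empty_or_nonempty with rfl | hSne
      · rcases T.eq_empty_or_nonempty with rfl | hTne
        · rfl
        · exact absurd heq.symm fun h => asym_case z hinj hgen hmin T ∅ (T.max' hTne)
            (T.max'_mem hTne) (Finset.notMem_empty _) (fun j hj => T.le_max' j hj)
            (fun j hj => absurd hj (Finset.notMem_empty j)) h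
      · rcases T.eq_empty_or_nonempty with rfl | hTne
        · exact absurd heq fun h => asym_case z hinj hgen hmin S ∅ (S.max' hSne)
            (S.max'_mem hSne) (Finset.notMem_empty _) (fun j hj => S.le_max' j hj)
            (fun j hj => absurd hj (Finset.notMem_empty j)) h
        · rcases lt_trichotomy (S.max' hSne) (T.max' hTne) with hlt | hE | hgt
          · exact absurd heq.symm fun h => asym_case z hinj hgen hmin T S (T.max' hTne)
              (T.max'_mem hTne) (fun hm => absurd (S.le_max' _ hm) (not_le.mpr hlt))
              (fun j hj => T.le_max' j hj) (fun j hj => (S.le_max' j hj).trans hlt.le) h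
          · set m := S.max' hSne with hm
            rw [prod_erase_max z S hSne, prod_erase_max z T hTne, ← hE, ← hm] at heq
            have heq' : (((S.erase m).sort (· ≤ ·)).map z).prod
                = (((T.erase m).sort (· ≤ ·)).map z).prod := by
              exact mul_right_cancel heq
            have hScard : (S.erase m).card = S.card - 1 :=
              Finset.card_erase_of_mem (hm ▸ S.max'_mem hSne)
            have hTcard : (T.erase m).card = T.card - 1 :=
              Finset.card_erase_of_mem (hE ▸ T.max'_mem hTne)
            have h1 : 1 ≤ S.card := Finset.card_pos.mpr hSne
            have h2 : 1 ≤ T.card := Finset.card_pos.mpr hTne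
            have := ih (S.erase m) (T.erase m) (by omega) heq'
            have hSrw : S = insert m (S.erase m) :=
              (Finset.insert_erase (hm ▸ S.max'_mem hSne)).symm
            have hTrw : T = insert m (T.erase m) :=
              (Finset.insert_erase (hE ▸ T.max'_mem hTne)).symm
            rw [hSrw, hTrw, this]
          · exact absurd heq fun h => asym_case z hinj hgen hmin S T (S.max' hSne)
              (S.max'_mem hSne) (fun hm => absurd (T.le_max' _ hm) (not_le.mpr hgt))
              (fun j hj => S.le_max' j hj) (fun j hj => (T.le_max' j hj).trans hgt.le) h
  intro S T h
  exact key (S.card + T.card) S T le_rfl h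
end

section
/- Let Γ = (N, (A^i), (u^i)) be a finite game and construct the labeled graph G with vertex set N ⊔ (⊔_i A^i) ⊔ A (where A = ∏_i A^i), edges {i,a} labeled λ for a ∈ A^i, edges {a, 𝐚} labeled λ' for a a coordinate of profile 𝐚, and edges {i, 𝐚} labeled u^i(𝐚), where λ ≠ λ' are values not occurring as payoffs. Then the map M sending a game symmetry φ of Γ to the vertex map ψ (ψ(i) = π(i), ψ(a) = φ(a), ψ(𝐚) = φ(𝐚)) is a bijection between the symmetry group of Γ and the automorphism group of G. -/
/-- A game symmetry of the game with players `N`, action sets `A i`, and payoffs `u`: a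
bijection `e` of the disjoint union of action sets inducing a player permutation `π` (actions
of a player are mapped to actions of the same image player), together with the induced
bijection `Φ` on action profiles, preserving payoffs. -/
structure GameSym (N : Type*) (A : N → Type*) (u : (i : N) → ((j : N) → A j) → ℝ) where
  π : Equiv.Perm N
  e : (Σ i, A i) ≃ (Σ i, A i)
  Φ : ((j : N) → A j) ≃ ((j : N) → A j)
  part : ∀ x : Σ i, A i, (e x).1 = π x.1
  compat : ∀ (a : (j : N) → A j) (i : N), e ⟨i, a i⟩ = ⟨π i, Φ a (π i)⟩
  payoff : ∀ (i : N) (a : (j : N) → A j), u i a = u (π i) (Φ a)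

/-- Vertex set of the labeled graph associated to a game: a player node for each player, an
action node for each action of each player, and a profile node for each action profile. -/
abbrev GameVertex (N : Type*) (A : N → Type*) : Type _ :=
  N ⊕ (Σ i, A i) ⊕ ((j : N) → A j)

/-- The edge-labeling of the graph associated to a game: `{i, a}` has label `lam` for each
action `a` of player `i`; `{a, 𝐚}` has label `lam'` whenever the action `a` is a coordinate of
the profile `𝐚`; `{i, 𝐚}` has label `u i 𝐚` for each player `i` and profile `𝐚`; all other
pairs are non-edges (`none`). -/
def gameGraphLabel {N : Type*} [DecidableEq N] {A : N → Type*} [∀ i, DecidableEq (A i)]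
    (u : (i : N) → ((j : N) → A j) → ℝ) (lam lam' : ℝ) :
    GameVertex N A → GameVertex N A → Option ℝ
  | Sum.inl i, Sum.inr (Sum.inl x) => if x.1 = i then some lam else none
  | Sum.inr (Sum.inl x), Sum.inl i => if x.1 = i then some lam else none
  | Sum.inr (Sum.inl x), Sum.inr (Sum.inr a) => if a x.1 = x.2 then some lam' else none
  | Sum.inr (Sum.inr a), Sum.inr (Sum.inl x) => if a x.1 = x.2 then some lam' else none
  | Sum.inl i, Sum.inr (Sum.inr a) => some (u i a)
  | Sum.inr (Sum.inr a), Sum.inl i => some (u i a)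
  | _, _ => none

section Aux
variable {N : Type*} [DecidableEq N] {A : N → Type*} [∀ i, DecidableEq (A i)]
  [∀ i, Nonempty (A i)]
  (u : (i : N) → ((j : N) → A j) → ℝ) (lam lam' : ℝ)

lemma lamP (i : N) : ∃ w, gameGraphLabel u lam lam' (Sum.inl i) w = some lam :=
  ⟨Sum.inr (Sum.inl ⟨i, Classical.arbitrary (A i)⟩), by simp [gameGraphLabel]⟩

lemma lamAct (x : Σ i, A i) :
    ∃ w, gameGraphLabel u lam lam' (Sum.inr (Sum.inl x)) w = some lam :=
  ⟨Sum.inl x.1, by simp [gameGraphLabel]⟩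

lemma lam'Act (x : Σ i, A i) :
    ∃ w, gameGraphLabel u lam lam' (Sum.inr (Sum.inl x)) w = some lam' := by
  obtain ⟨i, b⟩ := x
  exact ⟨Sum.inr (Sum.inr (Function.update (fun j => Classical.arbitrary (A j)) i b)),
    by simp [gameGraphLabel]⟩

lemma noLam'P (hll : lam ≠ lam') (hlam' : ∀ i a, u i a ≠ lam') (i : N) (w : GameVertex N A) :
    gameGraphLabel u lam lam' (Sum.inl i) w ≠ some lam' := by
  rcases w with j | x | a <;> simp only [gameGraphLabel]
  · simp
  · split_ifs <;> simp [hll]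
  · simp [hlam']

lemma noLamProf (hll : lam ≠ lam') (hlam : ∀ i a, u i a ≠ lam) (a : (j : N) → A j) (w : GameVertex N A) :
    gameGraphLabel u lam lam' (Sum.inr (Sum.inr a)) w ≠ some lam := by
  rcases w with j | x | b <;> simp only [gameGraphLabel]
  · simp [hlam]
  · split_ifs <;> simp [Ne.symm hll]
  · simp

end Aux

lemma gameSym_snd {N : Type*} [DecidableEq N] {A : N → Type*}
    {u : (i : N) → ((j : N) → A j) → ℝ} (s : GameSym N A u)
    (a : (j : N) → A j) (x : Σ i, A i) :
    s.Φ a (s.e x).1 = (s.e x).2 ↔ a x.1 = x.2 := by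
  obtain ⟨i, b⟩ := x
  have hc := s.compat (Function.update a i b) i
  simp only [Function.update_self] at hc
  rw [hc]
  simp only
  constructor
  · intro h
    have h2 : s.e ⟨i, a i⟩ = s.e ⟨i, b⟩ := by rw [s.compat a i, hc, h]
    simpa using s.e.injective h2
  · intro h; subst h; rw [Function.update_eq_self]


lemma fwd_pres {N : Type*} [DecidableEq N] {A : N → Type*} [∀ i, DecidableEq (A i)]
    {u : (i : N) → ((j : N) → A j) → ℝ} (lam lam' : ℝ) (s : GameSym N A u)
    (v w : GameVertex N A) :
    gameGraphLabel u lam lam' ((Equiv.sumCongr s.π (Equiv.sumCongr s.e s.Φ)) v)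
      ((Equiv.sumCongr s.π (Equiv.sumCongr s.e s.Φ)) w) = gameGraphLabel u lam lam' v w := by
  rcases v with i | x | a <;> rcases w with j | y | b <;>
    simp only [Equiv.sumCongr_apply, Sum.map_inl, Sum.map_inr, gameGraphLabel]
  · rw [s.part y]
    exact if_congr ⟨fun h => s.π.injective h, fun h => by rw [h]⟩ rfl rfl
  · exact (congrArg some (s.payoff i b)).symm
  · rw [s.part x]
    exact if_congr ⟨fun h => s.π.injective h, fun h => by rw [h]⟩ rfl rfl
  · exact if_congr (gameSym_snd s b x) rfl rfl
  · exact (congrArg some (s.payoff j a)).symm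
  · exact if_congr (gameSym_snd s a y) rfl rfl



/-- The map `M` sending a game symmetry `φ` of the finite game `Γ` to the vertex permutation
`ψ` of the associated labeled graph `G` (with `ψ(i) = π(i)` on players, `ψ(a) = φ(a)` on
actions, and `ψ(𝐚) = φ(𝐚)` on profiles) is a bijection between the symmetry group of `Γ` and
the automorphism group of `G`, provided the labels `lam ≠ lam'` do not occur as payoffs. -/
theorem stmt_8 {N : Type*} [Fintype N] [DecidableEq N]
    {A : N → Type*} [∀ i, Fintype (A i)] [∀ i, DecidableEq (A i)] [∀ i, Nonempty (A i)]
    (u : (i : N) → ((j : N) → A j) → ℝ) (lam lam' : ℝ) (hll : lam ≠ lam')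
    (hlam : ∀ i a, u i a ≠ lam) (hlam' : ∀ i a, u i a ≠ lam') :
    ∃ M : GameSym N A u →
        {ψ : Equiv.Perm (GameVertex N A) //
          ∀ v w, gameGraphLabel u lam lam' (ψ v) (ψ w) = gameGraphLabel u lam lam' v w},
      Function.Bijective M ∧
      ∀ s : GameSym N A u,
        (∀ i : N, (M s).1 (Sum.inl i) = Sum.inl (s.π i)) ∧
        (∀ x : Σ i, A i, (M s).1 (Sum.inr (Sum.inl x)) = Sum.inr (Sum.inl (s.e x))) ∧
        (∀ a : (j : N) → A j, (M s).1 (Sum.inr (Sum.inr a)) = Sum.inr (Sum.inr (s.Φ a))) := by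
  classical
  refine ⟨fun s => ⟨Equiv.sumCongr s.π (Equiv.sumCongr s.e s.Φ), fwd_pres lam lam' s⟩,
    ⟨?_, ?_⟩, fun s => ⟨fun i => rfl, fun x => rfl, fun a => rfl⟩⟩
  · -- injectivity
    intro s t h
    simp only [Subtype.mk.injEq] at h
    have hh : ∀ v, (Equiv.sumCongr s.π (Equiv.sumCongr s.e s.Φ)) v
        = (Equiv.sumCongr t.π (Equiv.sumCongr t.e t.Φ)) v := fun v => by rw [h]
    have hπ : s.π = t.π := Equiv.ext fun i => by simpa using hh (Sum.inl i)
    have he : s.e = t.e := Equiv.ext fun x => by simpa using hh (Sum.inr (Sum.inl x))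
    have hΦ : s.Φ = t.Φ := Equiv.ext fun a => by simpa using hh (Sum.inr (Sum.inr a))
    cases s; cases t
    simp only at hπ he hΦ
    cases hπ; cases he; cases hΦ; rfl
  · -- surjectivity
    rintro ⟨ψ, hψ⟩
    have hψ' : ∀ v w, gameGraphLabel u lam lam' (ψ.symm v) (ψ.symm w)
        = gameGraphLabel u lam lam' v w := by
      intro v w
      conv_rhs => rw [← ψ.apply_symm_apply v, ← ψ.apply_symm_apply w]
      exact (hψ _ _).symm
    have himg : ∀ (χ : Equiv.Perm (GameVertex N A)),
        (∀ v w, gameGraphLabel u lam lam' (χ v) (χ w) = gameGraphLabel u lam lam' v w) →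
        ∀ (v : GameVertex N A) (c : ℝ),
        ((∃ w, gameGraphLabel u lam lam' (χ v) w = some c) ↔
          (∃ w, gameGraphLabel u lam lam' v w = some c)) := by
      intro χ hχ v c
      constructor
      · rintro ⟨w, hw⟩
        refine ⟨χ.symm w, ?_⟩
        rw [← hχ v (χ.symm w), χ.apply_symm_apply]
        exact hw
      · rintro ⟨w, hw⟩
        exact ⟨χ w, (hχ v w).trans hw⟩
    have classify : ∀ (χ : Equiv.Perm (GameVertex N A)),
        (∀ v w, gameGraphLabel u lam lam' (χ v) (χ w) = gameGraphLabel u lam lam' v w) →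
        (∀ i, ∃ j, χ (Sum.inl i) = Sum.inl j) ∧
        (∀ x : Σ i, A i, ∃ y, χ (Sum.inr (Sum.inl x)) = Sum.inr (Sum.inl y)) ∧
        (∀ a : (j : N) → A j, ∃ b, χ (Sum.inr (Sum.inr a)) = Sum.inr (Sum.inr b)) := by
      intro χ hχ
      refine ⟨fun i => ?_, fun x => ?_, fun a => ?_⟩
      · have hl := (himg χ hχ (Sum.inl i) lam).mpr (lamP u lam lam' i)
        have hnl' : ¬ ∃ w, gameGraphLabel u lam lam' (χ (Sum.inl i)) w = some lam' := by
          rw [himg χ hχ]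
          rintro ⟨w, hw⟩
          exact noLam'P u lam lam' hll hlam' i w hw
        rcases hv : χ (Sum.inl i) with j | x | a
        · exact ⟨j, rfl⟩
        · rw [hv] at hnl'
          exact absurd (lam'Act u lam lam' x) hnl'
        · rw [hv] at hl
          obtain ⟨w, hw⟩ := hl
          exact absurd hw (noLamProf u lam lam' hll hlam a w)
      · have hl := (himg χ hχ (Sum.inr (Sum.inl x)) lam).mpr (lamAct u lam lam' x)
        have hl' := (himg χ hχ (Sum.inr (Sum.inl x)) lam').mpr (lam'Act u lam lam' x)
        rcases hv : χ (Sum.inr (Sum.inl x)) with j | y | a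
        · rw [hv] at hl'
          obtain ⟨w, hw⟩ := hl'
          exact absurd hw (noLam'P u lam lam' hll hlam' j w)
        · exact ⟨y, rfl⟩
        · rw [hv] at hl
          obtain ⟨w, hw⟩ := hl
          exact absurd hw (noLamProf u lam lam' hll hlam a w)
      · have hnl : ¬ ∃ w, gameGraphLabel u lam lam' (χ (Sum.inr (Sum.inr a))) w = some lam := by
          rw [himg χ hχ]
          rintro ⟨w, hw⟩
          exact noLamProf u lam lam' hll hlam a w hw
        rcases hv : χ (Sum.inr (Sum.inr a)) with j | x | b
        · rw [hv] at hnl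
          exact absurd (lamP u lam lam' j) hnl
        · rw [hv] at hnl
          exact absurd (lamAct u lam lam' x) hnl
        · exact ⟨b, rfl⟩
    obtain ⟨hP, hX, hA⟩ := classify ψ hψ
    obtain ⟨hP', hX', hA'⟩ := classify ψ.symm hψ'
    choose p hp using hP
    choose p' hp' using hP'
    choose q hq using hX
    choose q' hq' using hX'
    choose r hr using hA
    choose r' hr' using hA'
    have πli : ∀ i, p' (p i) = i := fun i => by
      have h0 : ψ.symm (ψ (Sum.inl i)) = Sum.inl i := ψ.symm_apply_apply _
      rw [hp i, hp' (p i)] at h0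
      exact Sum.inl_injective h0
    have πri : ∀ i, p (p' i) = i := fun i => by
      have h0 : ψ (ψ.symm (Sum.inl i)) = Sum.inl i := ψ.apply_symm_apply _
      rw [hp' i, hp (p' i)] at h0
      exact Sum.inl_injective h0
    have eli : ∀ x, q' (q x) = x := fun x => by
      have h0 : ψ.symm (ψ (Sum.inr (Sum.inl x))) = Sum.inr (Sum.inl x) := ψ.symm_apply_apply _
      rw [hq x, hq' (q x)] at h0
      exact Sum.inl_injective (Sum.inr_injective h0)
    have eri : ∀ x, q (q' x) = x := fun x => by
      have h0 : ψ (ψ.symm (Sum.inr (Sum.inl x))) = Sum.inr (Sum.inl x) := ψ.apply_symm_apply _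
      rw [hq' x, hq (q' x)] at h0
      exact Sum.inl_injective (Sum.inr_injective h0)
    have Φli : ∀ a, r' (r a) = a := fun a => by
      have h0 : ψ.symm (ψ (Sum.inr (Sum.inr a))) = Sum.inr (Sum.inr a) := ψ.symm_apply_apply _
      rw [hr a, hr' (r a)] at h0
      exact Sum.inr_injective (Sum.inr_injective h0)
    have Φri : ∀ a, r (r' a) = a := fun a => by
      have h0 : ψ (ψ.symm (Sum.inr (Sum.inr a))) = Sum.inr (Sum.inr a) := ψ.apply_symm_apply _
      rw [hr' a, hr (r' a)] at h0
      exact Sum.inr_injective (Sum.inr_injective h0)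
    have hpart : ∀ x : Σ i, A i, (q x).1 = p x.1 := by
      intro x
      have h1 := hψ (Sum.inl x.1) (Sum.inr (Sum.inl x))
      rw [hp, hq] at h1
      simp only [gameGraphLabel, if_pos rfl] at h1
      by_contra hne
      rw [if_neg hne] at h1
      simp at h1
    have hcompat : ∀ (a : (j : N) → A j) (i : N),
        q ⟨i, a i⟩ = ⟨p i, r a (p i)⟩ := by
      intro a i
      have h1 := hψ (Sum.inr (Sum.inl ⟨i, a i⟩)) (Sum.inr (Sum.inr a))
      rw [hq, hr] at h1
      simp only [gameGraphLabel, if_pos rfl] at h1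
      have h2 : r a (q ⟨i, a i⟩).1 = (q ⟨i, a i⟩).2 := by
        by_contra hne
        rw [if_neg hne] at h1
        simp at h1
      have h3 := hpart ⟨i, a i⟩
      rcases hy : q ⟨i, a i⟩ with ⟨j, c⟩
      rw [hy] at h2 h3
      simp only at h2 h3
      rw [← h3, h2]
    have hpay : ∀ (i : N) (a : (j : N) → A j), u i a = u (p i) (r a) := by
      intro i a
      have h1 := hψ (Sum.inl i) (Sum.inr (Sum.inr a))
      rw [hp, hr] at h1
      simp only [gameGraphLabel] at h1
      exact (Option.some_injective ℝ h1).symm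
    refine ⟨⟨⟨p, p', πli, πri⟩, ⟨q, q', eli, eri⟩, ⟨r, r', Φli, Φri⟩, hpart, hcompat, hpay⟩, ?_⟩
    apply Subtype.ext
    refine Equiv.ext fun v => ?_
    rcases v with i | x | a <;>
      simp only [Equiv.sumCongr_apply, Equiv.coe_fn_mk, Sum.map_inl, Sum.map_inr]
    · exact (hp i).symm
    · exact (hq x).symm
    · exact (hr a).symm
end

section
/- The bijection M between the symmetry group Sym(Γ) of a game Γ and the automorphism group Aut(G) of its associated labeled graph G (as constructed with action, profile, and payoff-labeled edges) is a group isomorphism: M(φ' ∘ φ) = M(φ') ∘ M(φ), and M maps the identity symmetry to the identity automorphism. -/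
/-- Composition `φ' ∘ φ` of game symmetries (first apply `s`, then `s'`). -/
def GameSym.comp {N : Type*} {A : N → Type*} {u : (i : N) → ((j : N) → A j) → ℝ}
    (s' s : GameSym N A u) : GameSym N A u where
  π := s.π.trans s'.π
  e := s.e.trans s'.e
  Φ := s.Φ.trans s'.Φ
  part := fun x => by simp [s.part, s'.part]
  compat := fun a i => by
    simp only [Equiv.trans_apply, s.compat a i, s'.compat (s.Φ a) (s.π i)]
  payoff := fun i a => by rw [s.payoff i a, s'.payoff (s.π i) (s.Φ a)]; rfl

/-- The identity game symmetry. -/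
def GameSym.id (N : Type*) (A : N → Type*) (u : (i : N) → ((j : N) → A j) → ℝ) :
    GameSym N A u where
  π := Equiv.refl N
  e := Equiv.refl _
  Φ := Equiv.refl _
  part := fun _ => rfl
  compat := fun _ _ => rfl
  payoff := fun _ _ => rfl

namespace Stmt9
set_option linter.unusedSectionVars false

variable {N : Type*} [DecidableEq N]
  {A : N → Type*} [∀ i, DecidableEq (A i)] [∀ i, Nonempty (A i)]
  {u : (i : N) → ((j : N) → A j) → ℝ} {lam lam' : ℝ}

lemma act_prof_iff (s : GameSym N A u) (x : Σ i, A i) (a : (j : N) → A j) :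
    s.Φ a (s.e x).1 = (s.e x).2 ↔ a x.1 = x.2 := by
  obtain ⟨i, ai⟩ := x
  constructor
  · intro h
    rcases hy : s.e ⟨i, ai⟩ with ⟨j, b⟩
    have h1 : j = s.π i := by have := s.part ⟨i, ai⟩; rw [hy] at this; exact this
    subst h1
    rw [hy] at h
    have h' : s.Φ a (s.π i) = b := h
    have h2 : s.e ⟨i, a i⟩ = s.e ⟨i, ai⟩ := by rw [hy, s.compat a i, h']
    have h3 := s.e.injective h2
    simpa using h3
  · intro h
    have h' : a i = ai := h
    have h2 : s.e ⟨i, ai⟩ = ⟨s.π i, s.Φ a (s.π i)⟩ := by rw [← h']; exact s.compat a i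
    rw [h2]

def Mfun (s : GameSym N A u) : Equiv.Perm (GameVertex N A) :=
  Equiv.sumCongr s.π (Equiv.sumCongr s.e s.Φ)

lemma Mfun_label (s : GameSym N A u) (v w : GameVertex N A) :
    gameGraphLabel u lam lam' (Mfun s v) (Mfun s w) = gameGraphLabel u lam lam' v w := by
  rcases v with i | x | a <;> rcases w with j | y | b <;>
    simp only [Mfun, Equiv.sumCongr_apply, Sum.map_inl, Sum.map_inr, gameGraphLabel]
  · rw [s.part]; simp
  · rw [← s.payoff]
  · rw [s.part]; simp
  · simp [act_prof_iff s x b]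
  · rw [← s.payoff]
  · simp [act_prof_iff s y a]

section

noncomputable def dflt : (j : N) → A j := fun j => Classical.arbitrary (A j)

noncomputable def thru (x : Σ i, A i) : (j : N) → A j := Function.update dflt x.1 x.2

lemma thru_self (x : Σ i, A i) : thru x x.1 = x.2 := Function.update_self _ _ _

variable (hll : lam ≠ lam') (hlam : ∀ i a, u i a ≠ lam) (hlam' : ∀ i a, u i a ≠ lam')
include hll hlam hlam'

lemma no_lam_prof (a : (j : N) → A j) (z : GameVertex N A) :
    gameGraphLabel u lam lam' (Sum.inr (Sum.inr a)) z ≠ some lam := by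
  rcases z with j | y | b <;> simp only [gameGraphLabel, ne_eq, Option.some.injEq]
  · exact hlam j a
  · split
    · exact fun hc => hll (Option.some.inj hc).symm
    · exact fun hc => nomatch hc
  · exact fun hc => nomatch hc

lemma no_lam'_player (i : N) (z : GameVertex N A) :
    gameGraphLabel u lam lam' (Sum.inl i) z ≠ some lam' := by
  rcases z with j | y | b <;> simp only [gameGraphLabel, ne_eq, Option.some.injEq]
  · exact fun hc => nomatch hc
  · split
    · exact fun hc => hll (Option.some.inj hc)
    · exact fun hc => nomatch hc
  · exact hlam' i b

variable (ψ : Equiv.Perm (GameVertex N A))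
variable (hψ : ∀ v w, gameGraphLabel u lam lam' (ψ v) (ψ w) = gameGraphLabel u lam lam' v w)
include hψ

lemma symm_label : ∀ v w, gameGraphLabel u lam lam' (ψ.symm v) (ψ.symm w)
    = gameGraphLabel u lam lam' v w := by
  intro v w
  have := hψ (ψ.symm v) (ψ.symm w)
  simpa using this.symm

lemma maps_player (i : N) : ∃ j, ψ (Sum.inl i) = Sum.inl j := by
  rcases hv : ψ (Sum.inl i) with j | y | b
  · exact ⟨j, rfl⟩
  · exfalso
    have h2 := hψ (Sum.inl i) (ψ.symm (Sum.inr (Sum.inr (thru y))))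
    rw [hv, ψ.apply_symm_apply] at h2
    have h1 : gameGraphLabel u lam lam' (Sum.inr (Sum.inl y)) (Sum.inr (Sum.inr (thru y)))
        = some lam' := by simp [gameGraphLabel, thru_self]
    rw [h1] at h2
    exact no_lam'_player hll hlam hlam' i _ h2.symm
  · exfalso
    obtain ⟨a0⟩ : Nonempty (A i) := inferInstance
    have h2 := hψ (Sum.inl i) (Sum.inr (Sum.inl ⟨i, a0⟩))
    rw [hv] at h2
    have h1 : gameGraphLabel u lam lam' (Sum.inl i) (Sum.inr (Sum.inl (⟨i, a0⟩ : Σ i, A i)))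
        = some lam := by simp [gameGraphLabel]
    rw [h1] at h2
    exact no_lam_prof hll hlam hlam' b _ h2

lemma maps_act (x : Σ i, A i) : ∃ y, ψ (Sum.inr (Sum.inl x)) = Sum.inr (Sum.inl y) := by
  rcases hv : ψ (Sum.inr (Sum.inl x)) with j | y | b
  · exfalso
    have h2 := hψ (Sum.inr (Sum.inl x)) (Sum.inr (Sum.inr (thru x)))
    rw [hv] at h2
    have h1 : gameGraphLabel u lam lam' (Sum.inr (Sum.inl x)) (Sum.inr (Sum.inr (thru x)))
        = some lam' := by simp [gameGraphLabel, thru_self]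
    rw [h1] at h2
    exact no_lam'_player hll hlam hlam' j _ h2
  · exact ⟨y, rfl⟩
  · exfalso
    have h2 := hψ (Sum.inr (Sum.inl x)) (Sum.inl x.1)
    rw [hv] at h2
    have h1 : gameGraphLabel u lam lam' (Sum.inr (Sum.inl x)) (Sum.inl x.1)
        = some lam := by simp [gameGraphLabel]
    rw [h1] at h2
    exact no_lam_prof hll hlam hlam' b _ h2

lemma maps_prof (a : (j : N) → A j) : ∃ b, ψ (Sum.inr (Sum.inr a)) = Sum.inr (Sum.inr b) := by
  rcases hv : ψ (Sum.inr (Sum.inr a)) with j | y | b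
  · exfalso
    have hsy : ψ.symm (Sum.inl j) = Sum.inr (Sum.inr a) := by rw [← hv, ψ.symm_apply_apply]
    obtain ⟨a0⟩ : Nonempty (A j) := inferInstance
    have h2 := symm_label hll hlam hlam' ψ hψ (Sum.inl j) (Sum.inr (Sum.inl ⟨j, a0⟩))
    rw [hsy] at h2
    have h1 : gameGraphLabel u lam lam' (Sum.inl j) (Sum.inr (Sum.inl (⟨j, a0⟩ : Σ i, A i)))
        = some lam := by simp [gameGraphLabel]
    rw [h1] at h2
    exact no_lam_prof hll hlam hlam' a _ h2
  · exfalso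
    have hsy : ψ.symm (Sum.inr (Sum.inl y)) = Sum.inr (Sum.inr a) := by
      rw [← hv, ψ.symm_apply_apply]
    have h2 := symm_label hll hlam hlam' ψ hψ (Sum.inr (Sum.inl y)) (Sum.inl y.1)
    rw [hsy] at h2
    have h1 : gameGraphLabel u lam lam' (Sum.inr (Sum.inl y)) (Sum.inl y.1)
        = some lam := by simp [gameGraphLabel]
    rw [h1] at h2
    exact no_lam_prof hll hlam hlam' a _ h2
  · exact ⟨b, rfl⟩

noncomputable def pmap (i : N) : N := (maps_player hll hlam hlam' ψ hψ i).choose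

lemma pmap_spec (i : N) : ψ (Sum.inl i) = Sum.inl (pmap hll hlam hlam' ψ hψ i) :=
  (maps_player hll hlam hlam' ψ hψ i).choose_spec

noncomputable def amap (x : Σ i, A i) : Σ i, A i := (maps_act hll hlam hlam' ψ hψ x).choose

lemma amap_spec (x : Σ i, A i) :
    ψ (Sum.inr (Sum.inl x)) = Sum.inr (Sum.inl (amap hll hlam hlam' ψ hψ x)) :=
  (maps_act hll hlam hlam' ψ hψ x).choose_spec

noncomputable def fmap (a : (j : N) → A j) : (j : N) → A j :=
  (maps_prof hll hlam hlam' ψ hψ a).choose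

lemma fmap_spec (a : (j : N) → A j) :
    ψ (Sum.inr (Sum.inr a)) = Sum.inr (Sum.inr (fmap hll hlam hlam' ψ hψ a)) :=
  (maps_prof hll hlam hlam' ψ hψ a).choose_spec

lemma amap_fst (x : Σ i, A i) :
    (amap hll hlam hlam' ψ hψ x).1 = pmap hll hlam hlam' ψ hψ x.1 := by
  have h2 := hψ (Sum.inl x.1) (Sum.inr (Sum.inl x))
  rw [pmap_spec, amap_spec] at h2
  have h1 : gameGraphLabel u lam lam' (Sum.inl x.1) (Sum.inr (Sum.inl x)) = some lam := by
    simp [gameGraphLabel]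
  rw [h1] at h2
  simp only [gameGraphLabel] at h2
  split at h2
  · assumption
  · simp at h2

lemma amap_compat (a : (j : N) → A j) (i : N) :
    amap hll hlam hlam' ψ hψ ⟨i, a i⟩
      = ⟨pmap hll hlam hlam' ψ hψ i, fmap hll hlam hlam' ψ hψ a (pmap hll hlam hlam' ψ hψ i)⟩ := by
  rcases hx : amap hll hlam hlam' ψ hψ ⟨i, a i⟩ with ⟨j, b⟩
  have hp : j = pmap hll hlam hlam' ψ hψ i := by
    have := amap_fst hll hlam hlam' ψ hψ ⟨i, a i⟩
    rw [hx] at this; exact this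
  subst hp
  have h2 := hψ (Sum.inr (Sum.inl ⟨i, a i⟩)) (Sum.inr (Sum.inr a))
  rw [amap_spec hll hlam hlam' ψ hψ, fmap_spec hll hlam hlam' ψ hψ, hx] at h2
  have h1 : gameGraphLabel u lam lam' (Sum.inr (Sum.inl (⟨i, a i⟩ : Σ i, A i)))
      (Sum.inr (Sum.inr a)) = some lam' := by simp [gameGraphLabel]
  rw [h1] at h2
  simp only [gameGraphLabel] at h2
  split at h2
  · rename_i hc
    have hc' : fmap hll hlam hlam' ψ hψ a (pmap hll hlam hlam' ψ hψ i) = b := hc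
    rw [hc']
  · simp at h2

lemma pay (i : N) (a : (j : N) → A j) :
    u i a = u (pmap hll hlam hlam' ψ hψ i) (fmap hll hlam hlam' ψ hψ a) := by
  have h2 := hψ (Sum.inl i) (Sum.inr (Sum.inr a))
  rw [pmap_spec, fmap_spec] at h2
  simp only [gameGraphLabel, Option.some.injEq] at h2
  exact h2.symm

noncomputable def invSym : GameSym N A u where
  π :=
    { toFun := pmap hll hlam hlam' ψ hψ
      invFun := pmap hll hlam hlam' ψ.symm (symm_label hll hlam hlam' ψ hψ)
      left_inv := fun i => by
        apply Sum.inl.inj (α := N)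
        rw [← pmap_spec hll hlam hlam' ψ.symm (symm_label hll hlam hlam' ψ hψ),
          ← pmap_spec hll hlam hlam' ψ hψ, Equiv.symm_apply_apply]
      right_inv := fun i => by
        apply Sum.inl.inj (α := N)
        rw [← pmap_spec hll hlam hlam' ψ hψ,
          ← pmap_spec hll hlam hlam' ψ.symm (symm_label hll hlam hlam' ψ hψ), Equiv.apply_symm_apply] }
  e :=
    { toFun := amap hll hlam hlam' ψ hψ
      invFun := amap hll hlam hlam' ψ.symm (symm_label hll hlam hlam' ψ hψ)
      left_inv := fun x => by
        apply Sum.inl.inj; apply Sum.inr.inj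
        rw [← amap_spec hll hlam hlam' ψ.symm (symm_label hll hlam hlam' ψ hψ),
          ← amap_spec hll hlam hlam' ψ hψ, Equiv.symm_apply_apply]
      right_inv := fun x => by
        apply Sum.inl.inj; apply Sum.inr.inj
        rw [← amap_spec hll hlam hlam' ψ hψ,
          ← amap_spec hll hlam hlam' ψ.symm (symm_label hll hlam hlam' ψ hψ), Equiv.apply_symm_apply] }
  Φ :=
    { toFun := fmap hll hlam hlam' ψ hψ
      invFun := fmap hll hlam hlam' ψ.symm (symm_label hll hlam hlam' ψ hψ)
      left_inv := fun a => by
        apply Sum.inr.inj; apply Sum.inr.inj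
        rw [← fmap_spec hll hlam hlam' ψ.symm (symm_label hll hlam hlam' ψ hψ),
          ← fmap_spec hll hlam hlam' ψ hψ, Equiv.symm_apply_apply]
      right_inv := fun a => by
        apply Sum.inr.inj; apply Sum.inr.inj
        rw [← fmap_spec hll hlam hlam' ψ hψ,
          ← fmap_spec hll hlam hlam' ψ.symm (symm_label hll hlam hlam' ψ hψ), Equiv.apply_symm_apply] }
  part := fun x => amap_fst hll hlam hlam' ψ hψ x
  compat := fun a i => amap_compat hll hlam hlam' ψ hψ a i
  payoff := fun i a => pay hll hlam hlam' ψ hψ i a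

lemma invSym_apply (v : GameVertex N A) :
    Mfun (invSym hll hlam hlam' ψ hψ) v = ψ v := by
  rcases v with i | x | a
  · exact (pmap_spec hll hlam hlam' ψ hψ i).symm
  · exact (amap_spec hll hlam hlam' ψ hψ x).symm
  · exact (fmap_spec hll hlam hlam' ψ hψ a).symm

end

end Stmt9

/-- The bijection `M` between the symmetry group `Sym(Γ)` of a game `Γ` and the automorphism
group `Aut(G)` of its associated labeled graph `G` is a group isomorphism: `M` sends a symmetry
to the vertex permutation acting as `π` on players, as `φ` on actions and on profiles; it is
bijective, maps composition of symmetries to composition of automorphisms, and maps the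
identity symmetry to the identity automorphism. -/
theorem stmt_9 {N : Type*} [Fintype N] [DecidableEq N]
    {A : N → Type*} [∀ i, Fintype (A i)] [∀ i, DecidableEq (A i)] [∀ i, Nonempty (A i)]
    (u : (i : N) → ((j : N) → A j) → ℝ) (lam lam' : ℝ) (hll : lam ≠ lam')
    (hlam : ∀ i a, u i a ≠ lam) (hlam' : ∀ i a, u i a ≠ lam') :
    ∃ M : GameSym N A u →
        {ψ : Equiv.Perm (GameVertex N A) //
          ∀ v w, gameGraphLabel u lam lam' (ψ v) (ψ w) = gameGraphLabel u lam lam' v w},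
      Function.Bijective M ∧
      (∀ s : GameSym N A u,
        (∀ i : N, (M s).1 (Sum.inl i) = Sum.inl (s.π i)) ∧
        (∀ x : Σ i, A i, (M s).1 (Sum.inr (Sum.inl x)) = Sum.inr (Sum.inl (s.e x))) ∧
        (∀ a : (j : N) → A j, (M s).1 (Sum.inr (Sum.inr a)) = Sum.inr (Sum.inr (s.Φ a)))) ∧
      (∀ s s' : GameSym N A u, (M (s'.comp s)).1 = (M s).1.trans (M s').1) ∧
      (M (GameSym.id N A u)).1 = Equiv.refl (GameVertex N A) := by
  classical
  refine ⟨fun s => ⟨Stmt9.Mfun s, Stmt9.Mfun_label s⟩, ⟨?_, ?_⟩,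
    fun s => ⟨fun i => rfl, fun x => rfl, fun a => rfl⟩,
    fun s s' => Equiv.ext fun v => by rcases v with i | x | a <;> rfl,
    Equiv.ext fun v => by rcases v with i | x | a <;> rfl⟩
  · intro s t hst
    have hval : Stmt9.Mfun s = Stmt9.Mfun t := congrArg Subtype.val hst
    have happ : ∀ v, Stmt9.Mfun s v = Stmt9.Mfun t v := fun v => by rw [hval]
    have hπ : s.π = t.π := Equiv.ext fun i => by
      simpa [Stmt9.Mfun] using happ (Sum.inl i)
    have he : s.e = t.e := Equiv.ext fun x => by
      simpa [Stmt9.Mfun] using happ (Sum.inr (Sum.inl x))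
    have hΦ : s.Φ = t.Φ := Equiv.ext fun a => by
      simpa [Stmt9.Mfun] using happ (Sum.inr (Sum.inr a))
    obtain ⟨sπ, se, sΦ, _, _, _⟩ := s
    obtain ⟨tπ, te, tΦ, _, _, _⟩ := t
    obtain rfl : sπ = tπ := hπ
    obtain rfl : se = te := he
    obtain rfl : sΦ = tΦ := hΦ
    rfl
  · rintro ⟨ψ, hψ⟩
    exact ⟨Stmt9.invSym hll hlam hlam' ψ hψ,
      Subtype.ext (Equiv.ext fun v => Stmt9.invSym_apply hll hlam hlam' ψ hψ v)⟩
end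

section
/- Let G = (V, E) be a finite simple graph, and let Γ be the two-player game where player 1's action set is V, player 2's is V ∪ {α}, and payoffs (with four distinct values c_1,...,c_4 for player 1 and d_1,...,d_4 for player 2) are: (c_1,d_1) if player 2 plays α; (c_2,d_2) if the players choose distinct non-adjacent vertices; (c_3,d_3) if distinct adjacent vertices; (c_4,d_4) if the same vertex. Then every game symmetry φ of Γ fixes both players, fixes α, satisfies φ|_{A^1}(v) = φ|_{A^2}(v) for all v ∈ V, and φ|_{A^1} is a graph automorphism of G. -/
/-- Action sets of the two-player game built from a graph on `V`: player `0` has action set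
`V`, player `1` has action set `V ∪ {α}` (with `α := none`). -/
abbrev GraphGameActs (V : Type*) : Fin 2 → Type _ := ![V, Option V]

/-- Payoffs of the two-player game built from a graph `G` on `V`: `(c 0, d 0)` if player 2
plays `α = none`; `(c 3, d 3)` if both players choose the same vertex; `(c 2, d 2)` if they
choose distinct adjacent vertices; `(c 1, d 1)` if they choose distinct non-adjacent
vertices. -/
def graphGamePayoff {V : Type*} [DecidableEq V] (G : SimpleGraph V) [DecidableRel G.Adj]
    (c d : Fin 4 → ℝ) : (i : Fin 2) → ((j : Fin 2) → GraphGameActs V j) → ℝ :=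
  fun i a =>
    match (a 1 : Option V) with
    | none => if i = 0 then c 0 else d 0
    | some w =>
        if (show V from a 0) = w then (if i = 0 then c 3 else d 3)
        else if G.Adj (show V from a 0) w then (if i = 0 then c 2 else d 2)
        else (if i = 0 then c 1 else d 1)

/-- Auxiliary: the profile where player `0` plays `v` and player `1` plays `o`. -/
def prof {V : Type*} (v : V) (o : Option V) : (j : Fin 2) → GraphGameActs V j
  | ⟨0, _⟩ => v
  | ⟨1, _⟩ => o

lemma prof_eta {V : Type*} (a : (j : Fin 2) → GraphGameActs V j) : a = prof (a 0) (a 1) := by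
  funext j
  match j with
  | ⟨0, _⟩ => rfl
  | ⟨1, _⟩ => rfl

lemma payoff0_none {V : Type*} [DecidableEq V] (G : SimpleGraph V) [DecidableRel G.Adj]
    (c d : Fin 4 → ℝ) (v : V) : graphGamePayoff G c d 0 (prof v none) = c 0 := rfl

lemma payoff1_none {V : Type*} [DecidableEq V] (G : SimpleGraph V) [DecidableRel G.Adj]
    (c d : Fin 4 → ℝ) (v : V) : graphGamePayoff G c d 1 (prof v none) = d 0 := rfl

lemma payoff0_some {V : Type*} [DecidableEq V] (G : SimpleGraph V) [DecidableRel G.Adj]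
    (c d : Fin 4 → ℝ) (v w : V) : graphGamePayoff G c d 0 (prof v (some w)) =
      if v = w then c 3 else if G.Adj v w then c 2 else c 1 := rfl

lemma payoff1_some {V : Type*} [DecidableEq V] (G : SimpleGraph V) [DecidableRel G.Adj]
    (c d : Fin 4 → ℝ) (v w : V) : graphGamePayoff G c d 1 (prof v (some w)) =
      if v = w then d 3 else if G.Adj v w then d 2 else d 1 := rfl

lemma snd_eq {I : Type*} {A : I → Type*} {i : I} {x y : A i}
    (h : (⟨i, x⟩ : Σ j, A j) = ⟨i, y⟩) : x = y := by
  simpa using h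

lemma perm_fin_two (π : Equiv.Perm (Fin 2)) : π = 1 ∨ π = Equiv.swap 0 1 := by
  have key : ∀ x : Fin 2, x = 0 ∨ x = 1 := by decide
  rcases key (π 0) with h0 | h0
  · left; ext x
    have h1 : π 1 = 1 := by
      rcases key (π 1) with h1 | h1
      · exact absurd (π.injective (h1.trans h0.symm)) (by decide)
      · exact h1
    rcases key x with rfl | rfl <;> simp [h0, h1]
  · right; ext x
    have h1 : π 1 = 0 := by
      rcases key (π 1) with h1 | h1
      · exact h1
      · exact absurd (π.injective (h0.trans h1.symm)) (by decide)
    rcases key x with rfl | rfl <;> simp [h0, h1]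

/-- Every game symmetry of the two-player game built from a graph `G` fixes both players,
fixes the extra action `α`, acts identically on the two copies of `V`, and its action on `V`
is a graph automorphism of `G`. -/
theorem stmt_10 {V : Type*} [DecidableEq V] (G : SimpleGraph V) [DecidableRel G.Adj]
    (c d : Fin 4 → ℝ) (hc : Function.Injective c) (hd : Function.Injective d)
    (s : GameSym (Fin 2) (GraphGameActs V) (graphGamePayoff G c d)) :
    s.π = 1 ∧
    s.e ⟨1, (none : Option V)⟩ = ⟨1, (none : Option V)⟩ ∧
    ∃ ψ : V ≃ V,
      (∀ v : V, s.e ⟨0, v⟩ = ⟨0, ψ v⟩) ∧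
      (∀ v : V, s.e ⟨1, (some v : Option V)⟩ = ⟨1, (some (ψ v) : Option V)⟩) ∧
      (∀ v w : V, G.Adj (ψ v) (ψ w) ↔ G.Adj v w) := by
  have key : ∀ x : Fin 2, x = 0 ∨ x = 1 := by decide
  rcases isEmpty_or_nonempty V with hV | hV
  · -- V empty
    have hsub : ∀ x : Σ i, GraphGameActs V i, x = ⟨1, (none : Option V)⟩ := by
      rintro ⟨i, y⟩
      match i, y with
      | ⟨0, _⟩, y => exact (hV.false (y : V)).elim
      | ⟨1, _⟩, y =>
        match (y : Option V) with
        | none => rfl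
        | some w => exact (IsEmpty.false w).elim
    have he : s.e ⟨1, (none : Option V)⟩ = ⟨1, (none : Option V)⟩ := hsub _
    have hπ : s.π = 1 := by
      rcases perm_fin_two s.π with hπ | hπ
      · exact hπ
      · have hp := s.part ⟨1, (none : Option V)⟩
        rw [he, hπ] at hp
        simp at hp
    exact ⟨hπ, he, Equiv.refl V,
      fun v => (IsEmpty.false v).elim, fun v => (IsEmpty.false v).elim,
      fun v w => (IsEmpty.false v).elim⟩
  · -- V nonempty
    obtain ⟨v₀⟩ := hV
    have hπ : s.π = 1 := by
      rcases perm_fin_two s.π with hπ | hπ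
      · exact hπ
      · exfalso
        have hπ0 : s.π 0 = 1 := by simp [hπ]
        have hπ1 : s.π 1 = 0 := by simp [hπ]
        -- the image of ⟨1, none⟩ lives in fiber 0
        rcases hw : s.e ⟨1, (none : Option V)⟩ with ⟨j, y⟩
        have hj : j = 0 := by
          have := s.part ⟨1, (none : Option V)⟩
          rw [hw, hπ1] at this
          exact this
        subst hj
        -- a preimage of ⟨1, none⟩
        obtain ⟨⟨i, z⟩, hx⟩ := s.e.surjective ⟨1, (none : Option V)⟩
        have hi : i = 0 := by
          have h := s.part ⟨i, z⟩
          rw [hx] at h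
          rcases key i with rfl | rfl
          · rfl
          · rw [hπ1] at h; exact absurd (show (1 : Fin 2) = 0 from h) (by decide)
        subst hi
        -- a preimage of ⟨1, some y⟩
        obtain ⟨⟨i', z'⟩, hx'⟩ := s.e.surjective ⟨1, (some (y : V) : Option V)⟩
        have hi' : i' = 0 := by
          have h := s.part ⟨i', z'⟩
          rw [hx'] at h
          rcases key i' with rfl | rfl
          · rfl
          · rw [hπ1] at h; exact absurd (show (1 : Fin 2) = 0 from h) (by decide)
        subst hi'
        -- first payoff computation: c 0 = d 0
        have h1 : c 0 = d 0 := by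
          have hcom := s.compat (prof (z : V) none) 0
          rw [hπ0] at hcom
          have hΦ1 : s.Φ (prof (z : V) none) 1 = none :=
            snd_eq (hcom.symm.trans hx)
          have hp := s.payoff 0 (prof (z : V) none)
          rw [hπ0, prof_eta (s.Φ (prof (z : V) none)), hΦ1] at hp
          exact hp
        -- second payoff computation: c 0 = d 3
        have h2 : c 0 = d 3 := by
          have hcom := s.compat (prof (z' : V) none) 0
          rw [hπ0] at hcom
          have hΦ1 : s.Φ (prof (z' : V) none) 1 = some (y : V) :=
            snd_eq (hcom.symm.trans hx')
          have hcom' := s.compat (prof (z' : V) none) 1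
          rw [hπ1] at hcom'
          have hΦ0 : s.Φ (prof (z' : V) none) 0 = (y : V) :=
            (snd_eq (hcom'.symm.trans hw)).symm ▸ rfl
          have hp := s.payoff 0 (prof (z' : V) none)
          rw [hπ0, prof_eta (s.Φ (prof (z' : V) none)), hΦ1, hΦ0] at hp
          have hp2 : c 0 = (if (show V from y) = (show V from y) then d 3
            else if G.Adj (show V from y) (show V from y) then d 2 else d 1) := hp
          rw [if_pos rfl] at hp2
          exact hp2
        exact absurd (hd (h1.symm.trans h2)) (by decide)
    have hπ0 : s.π 0 = 0 := by simp [hπ]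
    have hπ1 : s.π 1 = 1 := by simp [hπ]
    -- key equations
    have hK0 : ∀ (v : V) (o : Option V), s.e ⟨0, v⟩ = ⟨0, s.Φ (prof v o) 0⟩ := by
      intro v o
      have h := s.compat (prof v o) 0
      rw [hπ0] at h
      exact h
    have hK1 : ∀ (v : V) (o : Option V), s.e ⟨1, o⟩ = ⟨1, s.Φ (prof v o) 1⟩ := by
      intro v o
      have h := s.compat (prof v o) 1
      rw [hπ1] at h
      exact h
    set Ψ : V → V := fun v => s.Φ (prof v none) 0 with hΨdef
    set η : Option V → Option V := fun o => s.Φ (prof v₀ o) 1 with hηdef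
    have hΦ0 : ∀ (v : V) (o : Option V), s.Φ (prof v o) 0 = Ψ v := by
      intro v o
      exact snd_eq ((hK0 v o).symm.trans (hK0 v none))
    have hΦ1 : ∀ (v : V) (o : Option V), s.Φ (prof v o) 1 = η o := by
      intro v o
      exact snd_eq ((hK1 v o).symm.trans (hK1 v₀ o))
    have hΦ : ∀ (v : V) (o : Option V), s.Φ (prof v o) = prof (Ψ v) (η o) := by
      intro v o
      rw [prof_eta (s.Φ (prof v o)), hΦ0, hΦ1]
      rfl
    have hP0 : ∀ (v : V) (o : Option V),
        graphGamePayoff G c d 0 (prof v o) = graphGamePayoff G c d 0 (prof (Ψ v) (η o)) := by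
      intro v o
      have h := s.payoff 0 (prof v o)
      rw [hπ0, hΦ] at h
      exact h
    have hηnone : η none = none := by
      rcases hno : η none with _ | w
      · rfl
      · exfalso
        have h := hP0 v₀ none
        rw [hno, payoff0_none, payoff0_some] at h
        split_ifs at h <;> exact absurd (hc h) (by decide)
    have hηsome : ∀ v : V, η (some v) = some (Ψ v) := by
      intro v
      rcases hso : η (some v) with _ | w
      · exfalso
        have h := hP0 v (some v)
        rw [hso, payoff0_some, payoff0_none, if_pos rfl] at h
        exact absurd (hc h) (by decide)
      · have h := hP0 v (some v)
        rw [hso, payoff0_some, payoff0_some, if_pos rfl] at h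
        split_ifs at h with h1 h2
        · rw [h1]
        · exact absurd (hc h) (by decide)
        · exact absurd (hc h) (by decide)
    have hΨe : ∀ v : V, s.e ⟨0, v⟩ = ⟨0, Ψ v⟩ := fun v => hK0 v none
    have hinj : Function.Injective Ψ := by
      intro v v' h
      have := s.e.injective ((hΨe v).trans (by rw [h, ← hΨe v']))
      exact snd_eq this
    have hsurj : Function.Surjective Ψ := by
      intro w
      obtain ⟨⟨i, z⟩, hx⟩ := s.e.surjective ⟨0, (w : V)⟩
      have hi : i = 0 := by
        have h := s.part ⟨i, z⟩
        rw [hx] at h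
        rcases key i with rfl | rfl
        · rfl
        · rw [hπ1] at h; exact absurd (show (0 : Fin 2) = 1 from h) (by decide)
      subst hi
      exact ⟨z, snd_eq ((hΨe z).symm.trans hx)⟩
    refine ⟨hπ, (hK1 v₀ none).trans (by rw [show s.Φ (prof v₀ none) 1 = η none from rfl, hηnone]),
      Equiv.ofBijective Ψ ⟨hinj, hsurj⟩, hΨe, ?_, ?_⟩
    · intro v
      exact (hK1 v₀ (some v)).trans
        (by rw [show s.Φ (prof v₀ (some v)) 1 = η (some v) from rfl, hηsome]; rfl)
    · intro v w
      show G.Adj (Ψ v) (Ψ w) ↔ G.Adj v w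
      by_cases hvw : v = w
      · subst hvw
        simp
      · have hΨvw : Ψ v ≠ Ψ w := fun h => hvw (hinj h)
        have h := hP0 v (some w)
        rw [hηsome] at h
        rw [payoff0_some, payoff0_some, if_neg hvw, if_neg hΨvw] at h
        by_cases hA : G.Adj v w
        · rw [if_pos hA] at h
          split_ifs at h with h2
          · simp [hA, h2]
          · exact absurd (hc h) (by decide)
        · rw [if_neg hA] at h
          split_ifs at h with h2
          · exact absurd (hc h) (by decide)
          · simp [hA, h2]
end
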